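/- arXiv:2506.12660 — 3 statements merged into one kernel-verified Lean document; each statement's English description precedes it below -/
import Mathlib

section
/- Let G be a graph with a clique cutset C, and let V1, V2 be a partition of V(G) − C into two nonempty sets with no edges between V1 and V2. If the induced subgraph G[C ∪ V1] is perfect, then G is not minimally non-perfectly divisible. -/
open SimpleGraph

/-- A graph is perfect if every induced subgraph has chromatic number equal to
its clique number. -/
def IsPerfect {W : Type*} (G : SimpleGraph W) : Prop :=
  ∀ s : Set W, (G.induce s).chromaticNumber = ((G.induce s).cliqueNum : ℕ∞)

/-- `(A, B)` is a good partition of the induced subgraph `G[s]`: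
`A` and `B` partition `s`, `G[A]` is perfect and `ω(G[B]) < ω(G[s])`. -/
def GoodPartition {W : Type*} (G : SimpleGraph W) (s A B : Set W) : Prop :=
  A ∪ B = s ∧ Disjoint A B ∧ IsPerfect (G.induce A) ∧
    (G.induce B).cliqueNum < (G.induce s).cliqueNum

/-- A graph is perfectly divisible if every induced subgraph with at least one
edge admits a good partition. -/
def PerfectlyDivisible {W : Type*} (G : SimpleGraph W) : Prop :=
  ∀ s : Set W, (G.induce s).edgeSet.Nonempty → ∃ A B : Set W, GoodPartition G s A B

/-- A graph is minimally non-perfectly divisible if it is not perfectly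
divisible but every proper induced subgraph is. -/
def MNPD {W : Type*} (G : SimpleGraph W) : Prop :=
  ¬ PerfectlyDivisible G ∧ ∀ s : Set W, s ≠ Set.univ → PerfectlyDivisible (G.induce s)

/-- `C` is a clique cutset of `G`: `C` is a clique and `G - C` is disconnected,
i.e. the remaining vertices split into two nonempty parts with no edges between them. -/
def IsCliqueCutset {W : Type*} (G : SimpleGraph W) (C : Set W) : Prop :=
  G.IsClique C ∧ ∃ V1 V2 : Set W, V1.Nonempty ∧ V2.Nonempty ∧ Disjoint V1 V2 ∧
    V1 ∪ V2 = Cᶜ ∧ ∀ x ∈ V1, ∀ y ∈ V2, ¬ G.Adj x y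


set_option linter.unusedSectionVars false
set_option linter.unusedVariables false

open SimpleGraph

section Aux
variable {α β : Type*}

lemma myCliqueNum_le_of_embedding [Fintype α] [Fintype β] {G : SimpleGraph α}
    {G' : SimpleGraph β} (f : G ↪g G') : G.cliqueNum ≤ G'.cliqueNum := by
  classical
  obtain ⟨s, hs⟩ := G.exists_isNClique_cliqueNum
  have hclique : G'.IsClique (s.image f : Finset β) := by
    intro x hx y hy hxy
    simp only [Finset.coe_image, Set.mem_image, Finset.mem_coe] at hx hy
    obtain ⟨a, ha, rfl⟩ := hx
    obtain ⟨b, hb, rfl⟩ := hy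
    have hab : a ≠ b := fun h => hxy (by rw [h])
    exact f.map_rel_iff.mpr (hs.isClique ha hb hab)
  have hcard : (s.image f).card = s.card := Finset.card_image_of_injective _ f.injective
  calc G.cliqueNum = s.card := hs.card_eq.symm
    _ = (s.image f).card := hcard.symm
    _ ≤ G'.cliqueNum := IsClique.card_le_cliqueNum (tc := hclique)

lemma myCliqueNum_eq_of_iso [Fintype α] [Fintype β] {G : SimpleGraph α}
    {G' : SimpleGraph β} (e : G ≃g G') : G.cliqueNum = G'.cliqueNum :=
  le_antisymm (myCliqueNum_le_of_embedding e.toEmbedding)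
    (myCliqueNum_le_of_embedding e.symm.toEmbedding)

lemma myChromEq_of_iso {G : SimpleGraph α} {G' : SimpleGraph β} (e : G ≃g G') :
    G.chromaticNumber = G'.chromaticNumber :=
  le_antisymm (chromaticNumber_mono_of_hom e.toEmbedding.toHom)
    (chromaticNumber_mono_of_hom e.symm.toEmbedding.toHom)

lemma myCliqueNum_le_chromaticNumber [Fintype α] (G : SimpleGraph α) :
    (G.cliqueNum : ℕ∞) ≤ G.chromaticNumber := by
  obtain ⟨s, hs⟩ := G.exists_isNClique_cliqueNum
  rw [← hs.card_eq]
  exact hs.isClique.card_le_chromaticNumber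

end Aux

section Isos
variable {W : Type*} (G : SimpleGraph W)

/-- iso between nested induced subgraph and induced subgraph on the image set -/
noncomputable def induceInduceIso (s : Set W) (A : Set ↥s) :
    (G.induce s).induce A ≃g G.induce (Subtype.val '' A) where
  toEquiv := Equiv.Set.image Subtype.val A Subtype.val_injective
  map_rel_iff' := by
    intro a b
    simp [Equiv.Set.image, Equiv.Set.imageOfInjOn, comap_adj]

/-- iso of induced subgraphs along a graph isomorphism -/
def isoInduceImage {W' : Type*} {G' : SimpleGraph W'} (e : G ≃g G') (t : Set W) :
    G.induce t ≃g G'.induce (⇑e '' t) where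
  toEquiv := Equiv.image e.toEquiv t
  map_rel_iff' := by
    intro a b
    simp only [Equiv.image, Equiv.Set.image, Equiv.Set.imageOfInjOn, Equiv.coe_fn_mk,
      comap_adj, Function.Embedding.coe_subtype]
    exact e.map_adj_iff

end Isos

section Perf
variable {W W' : Type*} [Fintype W] [Fintype W'] {G : SimpleGraph W} {G' : SimpleGraph W'}

lemma isPerfect_of_iso (e : G ≃g G') (h : IsPerfect G) : IsPerfect G' := by
  classical
  intro s'
  have i := isoInduceImage G' e.symm s'
  rw [myChromEq_of_iso i, Nat.cast_inj.mpr (myCliqueNum_eq_of_iso i)]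
  exact h _

lemma IsPerfect.chromEq (h : IsPerfect G) :
    G.chromaticNumber = (G.cliqueNum : ℕ∞) := by
  classical
  have h2 := h Set.univ
  rwa [myChromEq_of_iso G.induceUnivIso,
    Nat.cast_inj.mpr (myCliqueNum_eq_of_iso G.induceUnivIso)] at h2

lemma isPerfect_induce (h : IsPerfect G) (A : Set W) : IsPerfect (G.induce A) := by
  classical
  intro s
  have i := induceInduceIso G A s
  rw [myChromEq_of_iso i, Nat.cast_inj.mpr (myCliqueNum_eq_of_iso i)]
  exact h _

lemma isPerfect_induce_subset {t u : Set W} (h : IsPerfect (G.induce u)) (hsub : t ⊆ u) :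
    IsPerfect (G.induce t) := by
  classical
  have h2 := isPerfect_induce h (Subtype.val ⁻¹' t)
  have i := induceInduceIso G u (Subtype.val ⁻¹' t)
  have himg : Subtype.val '' (Subtype.val ⁻¹' t : Set ↥u) = t := by
    rw [Subtype.image_preimage_coe]
    exact Set.inter_eq_self_of_subset_right hsub
  have h3 := isPerfect_of_iso i h2
  rwa [himg] at h3

end Perf

/-- cliqueNum is monotone for induced subgraphs -/
lemma myCliqueNum_mono {W : Type*} [Fintype W] {G : SimpleGraph W} {t u : Set W} (h : t ⊆ u) :
    (G.induce t).cliqueNum ≤ (G.induce u).cliqueNum := by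
  classical
  refine myCliqueNum_le_of_embedding (⟨⟨Set.inclusion h, Set.inclusion_injective h⟩, ?_⟩)
  intro a b
  simp

lemma exists_perm_comp {α β : Type*} [Fintype β] [DecidableEq β] {f g : α → β}
    (hf : Function.Injective f) (hg : Function.Injective g) :
    ∃ σ : Equiv.Perm β, ∀ a, σ (f a) = g a := by
  classical
  let e : {x // x ∈ Set.range f} ≃ {x // x ∈ Set.range g} :=
    (Equiv.ofInjective f hf).symm.trans (Equiv.ofInjective g hg)
  refine ⟨e.extendSubtype, fun a => ?_⟩
  rw [Equiv.extendSubtype_apply_of_mem e (f a) ⟨a, rfl⟩]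
  show ((Equiv.ofInjective g hg) ((Equiv.ofInjective f hf).symm ⟨f a, ⟨a, rfl⟩⟩) : β) = g a
  have : (Equiv.ofInjective f hf).symm ⟨f a, ⟨a, rfl⟩⟩ = a := by
    apply hf
    simp [Equiv.apply_ofInjective_symm hf]
  rw [this]
  simp [Equiv.ofInjective_apply]

lemma glue_chrom {V : Type*} [Fintype V] {G : SimpleGraph V} {X Y : Set V}
    (hno : ∀ x ∈ X, x ∉ Y → ∀ y ∈ Y, y ∉ X → ¬ G.Adj x y)
    (hcl : G.IsClique (X ∩ Y))
    (hX : (G.induce X).chromaticNumber = ((G.induce X).cliqueNum : ℕ∞))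
    (hY : (G.induce Y).chromaticNumber = ((G.induce Y).cliqueNum : ℕ∞)) :
    (G.induce (X ∪ Y)).chromaticNumber = ((G.induce (X ∪ Y)).cliqueNum : ℕ∞) := by
  classical
  set w := (G.induce (X ∪ Y)).cliqueNum with hw
  refine le_antisymm ?_ (myCliqueNum_le_chromaticNumber _)
  rw [chromaticNumber_le_iff_colorable]
  have hXle : (G.induce X).cliqueNum ≤ w := myCliqueNum_mono Set.subset_union_left
  have hYle : (G.induce Y).cliqueNum ≤ w := myCliqueNum_mono Set.subset_union_right
  have hcX : (G.induce X).Colorable w := by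
    refine Colorable.mono hXle ?_
    rw [← chromaticNumber_le_iff_colorable, hX]
  have hcY : (G.induce Y).Colorable w := by
    refine Colorable.mono hYle ?_
    rw [← chromaticNumber_le_iff_colorable, hY]
  obtain ⟨cX⟩ := hcX
  obtain ⟨cY⟩ := hcY
  set f : ↥(X ∩ Y) → Fin w := fun u => cX ⟨u.1, u.2.1⟩ with hfdef
  set g : ↥(X ∩ Y) → Fin w := fun u => cY ⟨u.1, u.2.2⟩ with hgdef
  have hf : Function.Injective f := by
    intro u v h
    by_contra hne
    have hne' : (u : V) ≠ (v : V) := fun hh => hne (Subtype.ext hh)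
    have hadj : G.Adj ↑u ↑v := hcl u.2 v.2 hne'
    exact cX.valid (show (G.induce X).Adj ⟨u.1, u.2.1⟩ ⟨v.1, v.2.1⟩ from hadj) h
  have hg : Function.Injective g := by
    intro u v h
    by_contra hne
    have hne' : (u : V) ≠ (v : V) := fun hh => hne (Subtype.ext hh)
    have hadj : G.Adj ↑u ↑v := hcl u.2 v.2 hne'
    exact cY.valid (show (G.induce Y).Adj ⟨u.1, u.2.2⟩ ⟨v.1, v.2.2⟩ from hadj) h
  obtain ⟨σ, hσ⟩ := exists_perm_comp hf hg
  refine ⟨⟨fun v => if h : (v : V) ∈ X then σ (cX ⟨v.1, h⟩) else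
      cY ⟨v.1, v.2.resolve_left h⟩, ?_⟩⟩
  intro a b hadj
  have hGadj : G.Adj ↑a ↑b := hadj
  by_cases ha : (a : V) ∈ X <;> by_cases hb : (b : V) ∈ X <;>
    simp only [ha, hb, dif_pos, dif_neg, not_false_iff]
  · intro h
    exact cX.valid (show (G.induce X).Adj ⟨a.1, ha⟩ ⟨b.1, hb⟩ from hGadj) (σ.injective h)
  · -- a ∈ X, b ∉ X (so b ∈ Y); then a ∈ Y too
    have hbY : (b : V) ∈ Y := b.2.resolve_left hb
    have haY : (a : V) ∈ Y := by
      by_contra haY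
      exact hno a ha haY b hbY hb hGadj
    have := hσ ⟨a.1, ⟨ha, haY⟩⟩
    rw [hfdef, hgdef] at this
    simp only at this
    rw [this]
    intro h
    exact cY.valid (show (G.induce Y).Adj ⟨a.1, haY⟩ ⟨b.1, hbY⟩ from hGadj) h
  · have haY : (a : V) ∈ Y := a.2.resolve_left ha
    have hbY : (b : V) ∈ Y := by
      by_contra hbY
      exact hno b hb hbY a haY ha hGadj.symm
    have := hσ ⟨b.1, ⟨hb, hbY⟩⟩
    rw [hfdef, hgdef] at this
    simp only at this
    rw [this]
    intro h
    exact cY.valid (show (G.induce Y).Adj ⟨a.1, haY⟩ ⟨b.1, hbY⟩ from hGadj) h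
  · intro h
    exact cY.valid
      (show (G.induce Y).Adj ⟨a.1, a.2.resolve_left ha⟩ ⟨b.1, b.2.resolve_left hb⟩ from hGadj) h

lemma isPerfect_glue {V : Type*} [Fintype V] {G : SimpleGraph V} {X Y : Set V}
    (hno : ∀ x ∈ X, x ∉ Y → ∀ y ∈ Y, y ∉ X → ¬ G.Adj x y)
    (hcl : G.IsClique (X ∩ Y))
    (hX : IsPerfect (G.induce X)) (hY : IsPerfect (G.induce Y)) :
    IsPerfect (G.induce (X ∪ Y)) := by
  classical
  intro s
  have i := induceInduceIso G (X ∪ Y) s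
  rw [myChromEq_of_iso i, Nat.cast_inj.mpr (myCliqueNum_eq_of_iso i)]
  set t := (Subtype.val '' s : Set V) with ht
  have htsub : t ⊆ X ∪ Y := by
    rintro _ ⟨a, _, rfl⟩
    exact a.2
  have hteq : t = (t ∩ X) ∪ (t ∩ Y) := by
    rw [← Set.inter_union_distrib_left]
    exact (Set.inter_eq_self_of_subset_left htsub).symm
  rw [hteq]
  apply glue_chrom
  · intro x hx hxY y hy hyX
    refine hno x hx.2 (fun hmem => hxY ⟨hx.1, hmem⟩) y hy.2 (fun hmem => hyX ⟨hy.1, hmem⟩)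
  · refine hcl.subset ?_
    rintro v ⟨⟨_, hvx⟩, ⟨_, hvy⟩⟩
    exact ⟨hvx, hvy⟩
  · exact (isPerfect_induce_subset hX Set.inter_subset_right).chromEq
  · exact (isPerfect_induce_subset hY Set.inter_subset_right).chromEq

lemma transfer_good {V : Type*} [Fintype V] (G : SimpleGraph V) (s : Set V)
    (hpd : PerfectlyDivisible (G.induce s)) (hedge : (G.induce s).edgeSet.Nonempty) :
    ∃ A B : Set V, A ∪ B = s ∧ Disjoint A B ∧ IsPerfect (G.induce A) ∧
      (G.induce B).cliqueNum < (G.induce s).cliqueNum := by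
  classical
  obtain ⟨e, he⟩ := hedge
  induction e using Sym2.ind with
  | _ a b =>
  rw [mem_edgeSet _] at he
  have hadj' : ((G.induce s).induce Set.univ).Adj ⟨a, trivial⟩ ⟨b, trivial⟩ := he
  obtain ⟨A, B, hu, hd, hp, hlt⟩ := hpd Set.univ ⟨_, (mem_edgeSet _).mpr hadj'⟩
  refine ⟨Subtype.val '' A, Subtype.val '' B, ?_, ?_, ?_, ?_⟩
  · rw [← Set.image_union, hu, Subtype.coe_image_univ]
  · exact (Set.disjoint_image_iff Subtype.val_injective).mpr hd
  · exact isPerfect_of_iso (induceInduceIso G s A) hp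
  · have e1 := myCliqueNum_eq_of_iso (induceInduceIso G s B)
    have e2 := myCliqueNum_eq_of_iso ((G.induce s).induceUnivIso)
    rw [e1, e2] at hlt
    exact hlt

lemma two_le_cliqueNum_of_adj {α : Type*} [Fintype α] {G : SimpleGraph α} {a b : α}
    (h : G.Adj a b) : 2 ≤ G.cliqueNum := by
  classical
  have hcl : G.IsClique (({a, b} : Finset α) : Set α) := by
    rw [Finset.coe_insert, Finset.coe_singleton, isClique_pair]
    exact fun _ => h
  have hcard : ({a, b} : Finset α).card = 2 := Finset.card_pair h.ne
  calc 2 = ({a, b} : Finset α).card := hcard.symm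
    _ ≤ G.cliqueNum := IsClique.card_le_cliqueNum (tc := hcl)

/-- If `G` has a clique cutset `C` with sides `V1, V2` and `G[C ∪ V1]` is perfect,
then `G` is not minimally non-perfectly divisible. -/
theorem not_MNPD_of_one_side_perfect {V : Type*} [Fintype V] (G : SimpleGraph V)
    (C V1 V2 : Set V) (hC : G.IsClique C)
    (h1 : V1.Nonempty) (h2 : V2.Nonempty) (hdisj : Disjoint V1 V2)
    (hcover : V1 ∪ V2 = Cᶜ) (hsep : ∀ x ∈ V1, ∀ y ∈ V2, ¬ G.Adj x y)
    (hperf : IsPerfect (G.induce (C ∪ V1))) :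
    ¬ MNPD G := by
  classical
  intro hM
  obtain ⟨hnpd, hmin⟩ := hM
  apply hnpd
  have hV1C : V1 ⊆ Cᶜ := hcover ▸ Set.subset_union_left
  have hV2C : V2 ⊆ Cᶜ := hcover ▸ Set.subset_union_right
  intro s hs
  by_cases hsu : s = Set.univ
  · subst hsu
    by_cases hlt : (G.induce V2).cliqueNum < (G.induce (Set.univ : Set V)).cliqueNum
    · refine ⟨C ∪ V1, V2, ?_, ?_, hperf, hlt⟩
      · rw [Set.union_assoc, hcover, Set.union_compl_self]
      · exact Set.disjoint_union_left.mpr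
          ⟨(Set.subset_compl_iff_disjoint_left.mp hV2C), hdisj⟩
    · push_neg at hlt
      -- 2 ≤ clique number of the whole graph
      obtain ⟨e, he⟩ := hs
      have w2 : 2 ≤ (G.induce (Set.univ : Set V)).cliqueNum := by
        induction e using Sym2.ind with
        | _ a b =>
        rw [mem_edgeSet _] at he
        exact two_le_cliqueNum_of_adj he
      have w2' : 2 ≤ (G.induce V2).cliqueNum := le_trans w2 hlt
      -- get an edge inside V2
      obtain ⟨K, hK⟩ := (G.induce V2).exists_isNClique_cliqueNum
      have hK2 : 1 < K.card := by rw [hK.card_eq]; omega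
      rw [Finset.one_lt_card] at hK2
      obtain ⟨x, hx, y, hy, hxy⟩ := hK2
      have hadjV2 : (G.induce V2).Adj x y := hK.isClique hx hy hxy
      have hGadj : G.Adj ↑x ↑y := hadjV2
      -- s' = C ∪ V2 is a proper subset
      have hs'ne : (C ∪ V2 : Set V) ≠ Set.univ := by
        obtain ⟨v, hv⟩ := h1
        intro hcontra
        have hmem : v ∈ C ∪ V2 := hcontra ▸ Set.mem_univ v
        rcases hmem with hvc | hv2
        · exact (hV1C hv) hvc
        · exact (Set.disjoint_left.mp hdisj hv) hv2
      have hadj' : (G.induce (C ∪ V2)).Adj ⟨↑x, Or.inr x.2⟩ ⟨↑y, Or.inr y.2⟩ := hGadj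
      obtain ⟨A, B, hu, hd, hp, hlt2⟩ := transfer_good G (C ∪ V2) (hmin _ hs'ne)
        ⟨_, (mem_edgeSet _).mpr hadj'⟩
      have hAs' : A ⊆ C ∪ V2 := hu ▸ Set.subset_union_left
      have hBs' : B ⊆ C ∪ V2 := hu ▸ Set.subset_union_right
      refine ⟨A ∪ V1, B, ?_, ?_, ?_, ?_⟩
      · rw [Set.union_right_comm, hu, Set.union_assoc, Set.union_comm V2 V1, hcover,
          Set.union_compl_self]
      · refine Set.disjoint_union_left.mpr ⟨hd, ?_⟩
        refine Set.disjoint_of_subset_right hBs' ?_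
        exact Set.disjoint_union_right.mpr
          ⟨(Set.subset_compl_iff_disjoint_left.mp hV1C).symm, hdisj⟩
      · -- perfection via gluing A and (A ∩ C) ∪ V1 along the clique A ∩ C
        have hdisjA1 : Disjoint A V1 := by
          refine Set.disjoint_of_subset_left hAs' ?_
          exact (Set.disjoint_union_right.mpr
            ⟨(Set.subset_compl_iff_disjoint_left.mp hV1C).symm, hdisj⟩).symm
        have hglue := isPerfect_glue (G := G) (X := A) (Y := (A ∩ C) ∪ V1)
          ?_ ?_ hp ?_
        · have heq : A ∪ ((A ∩ C) ∪ V1) = A ∪ V1 := by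
            rw [← Set.union_assoc, Set.union_eq_self_of_subset_right Set.inter_subset_left]
          rwa [heq] at hglue
        · intro a haA haY b hbY hbA
          have hb1 : b ∈ V1 := by
            rcases hbY with hb | hb
            · exact absurd hb.1 hbA
            · exact hb
          have ha2 : a ∈ V2 := by
            rcases hAs' haA with hc | h2'
            · exact absurd (Or.inl ⟨haA, hc⟩) haY
            · exact h2'
          exact fun h => hsep b hb1 a ha2 h.symm
        · refine hC.subset ?_
          rintro v ⟨hvA, hv2⟩
          rcases hv2 with hv | hv
          · exact hv.2
          · exact absurd hv (Set.disjoint_left.mp hdisjA1 hvA)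
        · refine isPerfect_induce_subset hperf ?_
          exact Set.union_subset (Set.inter_subset_right.trans Set.subset_union_left)
            Set.subset_union_right
      · exact lt_of_lt_of_le hlt2 (myCliqueNum_mono (Set.subset_univ _))
  · obtain ⟨A, B, h₁, h₂, h₃, h₄⟩ := transfer_good G s (hmin s hsu) hs
    exact ⟨A, B, h₁, h₂, h₃, h₄⟩
end

section
/- The chromatic number of a perfectly divisible graph G is at most ω(G)², i.e., χ(G) ≤ ω(G)² for every perfectly divisible graph G. -/
open SimpleGraph

lemma cliqueNum_le_of_embedding {α β : Type*} [Fintype α] [Fintype β]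
    {G : SimpleGraph α} {G' : SimpleGraph β} (f : G ↪g G') :
    G.cliqueNum ≤ G'.cliqueNum := by
  obtain ⟨s, hs⟩ := G.exists_isNClique_cliqueNum
  have hc : G'.IsClique (s.map f.toEmbedding : Finset β) := by
    rintro x hx y hy hxy
    simp only [Finset.coe_map, Set.mem_image, Finset.mem_coe] at hx hy
    obtain ⟨a, ha, rfl⟩ := hx
    obtain ⟨b, hb, rfl⟩ := hy
    exact f.map_adj_iff.mpr (hs.isClique ha hb (fun h => hxy (by rw [h])))
  have := hc.card_le_cliqueNum
  rwa [Finset.card_map, hs.card_eq] at this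

lemma cliqueNum_induce_mono {V : Type*} [Fintype V] (G : SimpleGraph V)
    {A B : Set V} (h : A ⊆ B) :
    (G.induce A).cliqueNum ≤ (G.induce B).cliqueNum := by
  haveI : Fintype A := A.toFinite.fintype
  haveI : Fintype B := B.toFinite.fintype
  exact cliqueNum_le_of_embedding
    ⟨⟨Set.inclusion h, Set.inclusion_injective h⟩, Iff.rfl⟩

lemma cliqueNum_induce_univ {V : Type*} [Fintype V] (G : SimpleGraph V) :
    (G.induce (Set.univ : Set V)).cliqueNum = G.cliqueNum := by
  haveI : Fintype (Set.univ : Set V) := Set.fintypeUniv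
  exact le_antisymm (cliqueNum_le_of_embedding (induceUnivIso G).toEmbedding)
    (cliqueNum_le_of_embedding (induceUnivIso G).symm.toEmbedding)

lemma colorable_union {V : Type*} (G : SimpleGraph V) {s A B : Set V}
    (hu : A ∪ B = s) {m n : ℕ} (hA : (G.induce A).Colorable m)
    (hB : (G.induce B).Colorable n) : (G.induce s).Colorable (m + n) := by
  classical
  obtain ⟨cA⟩ := hA
  obtain ⟨cB⟩ := hB
  have hmem : ∀ v : s, (v : V) ∉ A → (v : V) ∈ B := by
    intro v h
    have hv : (v : V) ∈ A ∪ B := hu ▸ v.2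
    exact hv.resolve_left h
  refine ⟨Coloring.mk (fun v => if h : (v : V) ∈ A then Fin.castAdd n (cA ⟨v, h⟩)
    else Fin.natAdd m (cB ⟨(v:V), hmem v h⟩)) ?_⟩
  rintro ⟨u, hus⟩ ⟨v, hvs⟩ hadj heq
  have hGuv : G.Adj u v := hadj
  have hne : u ≠ v := fun h => (G.loopless.irrefl u) (h ▸ hGuv)
  dsimp only at heq
  by_cases hu' : u ∈ A <;> by_cases hv' : v ∈ A <;>
    simp only [hu', hv', dif_pos, dif_neg, not_false_iff] at heq
  · have : cA ⟨u, hu'⟩ = cA ⟨v, hv'⟩ := by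
      have := congrArg Fin.val heq
      simp only [Fin.coe_castAdd] at this
      exact Fin.ext this
    exact cA.valid (show (G.induce A).Adj ⟨u, hu'⟩ ⟨v, hv'⟩ from hGuv) this
  · have := congrArg Fin.val heq
    simp only [Fin.coe_castAdd, Fin.coe_natAdd] at this
    have h1 := (cA ⟨u, hu'⟩).isLt
    omega
  · have := congrArg Fin.val heq
    simp only [Fin.coe_castAdd, Fin.coe_natAdd] at this
    have h1 := (cA ⟨v, hv'⟩).isLt
    omega
  · have : cB ⟨u, hmem ⟨u, hus⟩ hu'⟩ = cB ⟨v, hmem ⟨v, hvs⟩ hv'⟩ := by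
      have := congrArg Fin.val heq
      simp only [Fin.coe_natAdd] at this
      exact Fin.ext (by omega)
    exact cB.valid (show (G.induce B).Adj ⟨u, hmem ⟨u, hus⟩ hu'⟩ ⟨v, hmem ⟨v, hvs⟩ hv'⟩ from hGuv) this

lemma colorable_cliqueNum_of_isPerfect {W : Type*} [Fintype W] (G : SimpleGraph W)
    (h : IsPerfect G) : G.Colorable G.cliqueNum := by
  haveI : Fintype (Set.univ : Set W) := Set.fintypeUniv
  have h2 : (G.induce Set.univ).chromaticNumber ≤ ((G.cliqueNum : ℕ) : ℕ∞) := by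
    rw [h Set.univ, cliqueNum_induce_univ]
  rw [chromaticNumber_le_iff_colorable] at h2
  exact Colorable.of_hom (induceUnivIso G).symm.toEmbedding.toHom h2

lemma key_lemma {V : Type*} [Fintype V] (G : SimpleGraph V) (hpd : PerfectlyDivisible G) :
    ∀ k (s : Set V), (G.induce s).cliqueNum ≤ k → (G.induce s).Colorable (k ^ 2) := by
  intro k
  induction k with
  | zero =>
    intro s hs0
    have he : IsEmpty ↥s := by
      by_contra h
      rw [not_isEmpty_iff] at h
      obtain ⟨x⟩ := h
      haveI : Fintype ↥s := s.toFinite.fintype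
      have hc : (G.induce s).IsClique (({x} : Finset ↥s) : Set ↥s) := by simp
      have := hc.card_le_cliqueNum
      simp at this
      omega
    exact Colorable.of_isEmpty _
  | succ k ih =>
    intro s hle
    haveI : Fintype ↥s := s.toFinite.fintype
    by_cases hk : (G.induce s).cliqueNum ≤ k
    · exact (ih s hk).mono (by nlinarith)
    · have hω : (G.induce s).cliqueNum = k + 1 := by omega
      by_cases hedge : (G.induce s).edgeSet.Nonempty
      · obtain ⟨A, B, hu, hdisj, hperf, hlt⟩ := hpd s hedge
        haveI : Fintype ↥A := A.toFinite.fintype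
        have hAs : A ⊆ s := hu ▸ Set.subset_union_left
        have hcA : (G.induce A).Colorable (k + 1) := by
          refine (colorable_cliqueNum_of_isPerfect _ hperf).mono ?_
          have := cliqueNum_induce_mono G hAs
          omega
        have hcB : (G.induce B).Colorable (k ^ 2) := by
          refine ih B ?_
          omega
        exact (colorable_union G hu hcA hcB).mono (by nlinarith)
      · refine (Colorable.mono (show 1 ≤ (k+1)^2 by nlinarith) ?_)
        exact ⟨Coloring.mk (fun _ => 0) (fun {u v} hadj _ => hedge ⟨s(u, v), hadj⟩)⟩

/-- The chromatic number of a perfectly divisible graph is at most the square of its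
clique number. -/
theorem chromatic_le_cliqueNum_sq_of_perfectlyDivisible {V : Type*} [Fintype V]
    (G : SimpleGraph V) (hpd : PerfectlyDivisible G) :
    G.chromaticNumber ≤ (G.cliqueNum ^ 2 : ℕ) := by
  rw [chromaticNumber_le_iff_colorable]
  have h := key_lemma G hpd G.cliqueNum Set.univ (by rw [cliqueNum_induce_univ])
  exact Colorable.of_hom (induceUnivIso G).symm.toEmbedding.toHom h
end

section
/- Let G be a graph with a clique cutset C, and let V1, V2 be a partition of V(G) − C into nonempty sets with no edges between V1 and V2. If both induced subgraphs G[C ∪ V1] and G[C ∪ V2] are perfect, then G is perfect. -/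
open SimpleGraph

-- aux lemma 1: cliqueNum ≤ n if colorable
lemma aux_cliqueNum_le_of_colorable {α : Type*} [Fintype α] {G : SimpleGraph α} {n : ℕ}
    (h : G.Colorable n) : G.cliqueNum ≤ n := by
  classical
  obtain ⟨t, ht⟩ := G.exists_isNClique_cliqueNum
  obtain ⟨c⟩ := h
  rw [← ht.2]
  have hinj : Set.InjOn c t := by
    intro x hx y hy hxy
    by_contra hne
    exact c.valid (ht.1 hx hy hne) hxy
  calc t.card = (t.image c).card := (Finset.card_image_of_injOn hinj).symm
    _ ≤ Fintype.card (Fin n) := Finset.card_le_card (Finset.subset_univ _) |>.trans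
        (by simp)
    _ = n := by simp

-- aux lemma 2: cliqueNum monotone under embedding
lemma aux_cliqueNum_le_of_embedding {α β : Type*} [Fintype α] [Fintype β]
    {G : SimpleGraph α} {H : SimpleGraph β} (f : G ↪g H) : G.cliqueNum ≤ H.cliqueNum := by
  classical
  obtain ⟨t, ht⟩ := G.exists_isNClique_cliqueNum
  rw [← ht.2]
  have hclique : H.IsClique (t.map f.toEmbedding) := by
    intro x hx y hy hne
    simp only [Finset.coe_map, Set.mem_image, Finset.mem_coe] at hx hy
    obtain ⟨x', hx', rfl⟩ := hx
    obtain ⟨y', hy', rfl⟩ := hy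
    exact f.map_adj_iff.mpr (ht.1 hx' hy' (fun h => hne (by rw [h])))
  calc t.card = (t.map f.toEmbedding).card := (Finset.card_map _).symm
    _ ≤ H.cliqueNum := hclique.card_le_cliqueNum


-- embedding of induced subgraphs along inclusion
def auxInduceEmb {V : Type*} (G : SimpleGraph V) {A B : Set V} (h : A ⊆ B) :
    G.induce A ↪g G.induce B where
  toFun := Set.inclusion h
  inj' := Set.inclusion_injective h
  map_rel_iff' := Iff.rfl

-- iso between double induce and induce on image
noncomputable def auxInduceInduceIso {V : Type*} (G : SimpleGraph V) (A : Set V) (t : Set ↥A) :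
    (G.induce A).induce t ≃g G.induce (Subtype.val '' t) where
  toEquiv := Equiv.Set.image Subtype.val t Subtype.val_injective
  map_rel_iff' := by
    intro a b
    simp [Equiv.Set.image, Equiv.Set.imageOfInjOn]

-- perfection passes to subsets
lemma aux_perfect_sub {V : Type*} [Fintype V] (G : SimpleGraph V) {A B : Set V}
    (hperf : IsPerfect (G.induce A)) (hBA : B ⊆ A) :
    (G.induce B).chromaticNumber = ((G.induce B).cliqueNum : ℕ∞) := by
  classical
  set t : Set ↥A := Subtype.val ⁻¹' B with ht
  have himg : Subtype.val '' t = B := by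
    rw [ht, Subtype.image_preimage_coe]
    exact Set.inter_eq_right.mpr hBA
  have e : (G.induce A).induce t ≃g G.induce B := himg ▸ auxInduceInduceIso G A t
  have hchrom : ((G.induce A).induce t).chromaticNumber = (G.induce B).chromaticNumber := by
    exact le_antisymm (chromaticNumber_mono_of_hom e.toEmbedding.toHom)
      (chromaticNumber_mono_of_hom e.symm.toEmbedding.toHom)
  have hcl : ((G.induce A).induce t).cliqueNum = (G.induce B).cliqueNum :=
    le_antisymm (aux_cliqueNum_le_of_embedding e.toEmbedding)
      (aux_cliqueNum_le_of_embedding e.symm.toEmbedding)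
  rw [← hchrom, ← hcl]
  exact hperf t

-- gluing colorings along a clique
lemma aux_glue {V : Type*} [Fintype V] (G : SimpleGraph V) (B1 B2 : Set V) (k : ℕ)
    (hK : G.IsClique (B1 ∩ B2))
    (hno : ∀ x ∈ B1 \ B2, ∀ y ∈ B2 \ B1, ¬ G.Adj x y)
    (h1 : (G.induce B1).Colorable k) (h2 : (G.induce B2).Colorable k) :
    (G.induce (B1 ∪ B2)).Colorable k := by
  classical
  obtain ⟨c1⟩ := h1
  obtain ⟨c2⟩ := h2
  set K : Set V := B1 ∩ B2 with hKdef
  set g1 : ↥K → Fin k := fun v => c1 ⟨v.1, v.2.1⟩ with hg1def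
  set g2 : ↥K → Fin k := fun v => c2 ⟨v.1, v.2.2⟩ with hg2def
  have hg1 : Function.Injective g1 := by
    intro x y h
    by_contra hne
    have hxy : (x : V) ≠ (y : V) := fun hh => hne (Subtype.ext hh)
    have hadj : G.Adj x.1 y.1 := hK x.2 y.2 hxy
    exact c1.valid (show (G.induce B1).Adj ⟨x.1, x.2.1⟩ ⟨y.1, y.2.1⟩ from hadj) h
  have hg2 : Function.Injective g2 := by
    intro x y h
    by_contra hne
    have hxy : (x : V) ≠ (y : V) := fun hh => hne (Subtype.ext hh)
    have hadj : G.Adj x.1 y.1 := hK x.2 y.2 hxy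
    exact c2.valid (show (G.induce B2).Adj ⟨x.1, x.2.2⟩ ⟨y.1, y.2.2⟩ from hadj) h
  set e : ↥(Set.range g2) ≃ ↥(Set.range g1) :=
    (Equiv.ofInjective g2 hg2).symm.trans (Equiv.ofInjective g1 hg1) with hedef
  have hcard : Fintype.card {x // ¬ x ∈ Set.range g2} = Fintype.card {x // ¬ x ∈ Set.range g1} := by
    have h1' : Fintype.card {x // x ∈ Set.range g2} = Fintype.card {x // x ∈ Set.range g1} :=
      Fintype.card_congr e
    rw [Fintype.card_subtype_compl, Fintype.card_subtype_compl, h1']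
  set f : {x // ¬ x ∈ Set.range g2} ≃ {x // ¬ x ∈ Set.range g1} :=
    Fintype.equivOfCardEq hcard with hfdef
  set σ : Equiv.Perm (Fin k) := Equiv.subtypeCongr e f with hσdef
  have hσ : ∀ v : ↥K, σ (g2 v) = g1 v := by
    intro v
    have hp : g2 v ∈ Set.range g2 := ⟨v, rfl⟩
    have h1 : σ (g2 v) = (e ⟨g2 v, hp⟩ : Fin k) := by
      simp [hσdef, Equiv.subtypeCongr, hp]
    have h2 : (Equiv.ofInjective g2 hg2).symm ⟨g2 v, hp⟩ = v := by
      rw [Equiv.symm_apply_eq, Equiv.ofInjective_apply]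
    rw [h1, hedef]
    simp [h2]
  apply Nonempty.intro
  refine Coloring.mk (fun (v : ↥(B1 ∪ B2)) => if h : (v : V) ∈ B1 then c1 ⟨v.1, h⟩
    else σ (c2 ⟨v.1, (Set.mem_union _ _ _ |>.mp v.2).resolve_left h⟩)) ?_
  intro v w hadj
  have hadj' : G.Adj v.1 w.1 := hadj
  by_cases hv : (v : V) ∈ B1 <;> by_cases hw : (w : V) ∈ B1
  · simp only [dif_pos hv, dif_pos hw]
    exact c1.valid (show (G.induce B1).Adj ⟨v.1, hv⟩ ⟨w.1, hw⟩ from hadj')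
  · simp only [dif_pos hv, dif_neg hw]
    have hwB2 : (w : V) ∈ B2 := (Set.mem_union _ _ _ |>.mp w.2).resolve_left hw
    have hvB2 : (v : V) ∈ B2 := by
      by_contra h
      exact hno v.1 ⟨hv, h⟩ w.1 ⟨hwB2, hw⟩ hadj'
    have hσv : σ (c2 ⟨v.1, hvB2⟩) = c1 ⟨v.1, hv⟩ := hσ ⟨v.1, ⟨hv, hvB2⟩⟩
    intro hEq
    exact c2.valid (show (G.induce B2).Adj ⟨v.1, hvB2⟩ ⟨w.1, hwB2⟩ from hadj')
      (σ.injective (hσv.trans hEq))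
  · simp only [dif_neg hv, dif_pos hw]
    have hvB2 : (v : V) ∈ B2 := (Set.mem_union _ _ _ |>.mp v.2).resolve_left hv
    have hwB2 : (w : V) ∈ B2 := by
      by_contra h
      exact hno w.1 ⟨hw, h⟩ v.1 ⟨hvB2, hv⟩ hadj'.symm
    have hσw : σ (c2 ⟨w.1, hwB2⟩) = c1 ⟨w.1, hw⟩ := hσ ⟨w.1, ⟨hw, hwB2⟩⟩
    intro hEq
    exact c2.valid (show (G.induce B2).Adj ⟨v.1, hvB2⟩ ⟨w.1, hwB2⟩ from hadj')
      (σ.injective (hEq.trans hσw.symm))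
  · simp only [dif_neg hv, dif_neg hw]
    have hvB2 : (v : V) ∈ B2 := (Set.mem_union _ _ _ |>.mp v.2).resolve_left hv
    have hwB2 : (w : V) ∈ B2 := (Set.mem_union _ _ _ |>.mp w.2).resolve_left hw
    intro hEq
    exact c2.valid (show (G.induce B2).Adj ⟨v.1, hvB2⟩ ⟨w.1, hwB2⟩ from hadj')
      (σ.injective hEq)

/-- If `G` has a clique cutset `C` with sides `V1, V2` and both `G[C ∪ V1]` and
`G[C ∪ V2]` are perfect, then `G` is perfect. -/
theorem perfect_of_clique_cutset_sides_perfect {V : Type*} [Fintype V] (G : SimpleGraph V)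
    (C V1 V2 : Set V) (hC : G.IsClique C)
    (h1 : V1.Nonempty) (h2 : V2.Nonempty) (hdisj : Disjoint V1 V2)
    (hcover : V1 ∪ V2 = Cᶜ) (hsep : ∀ x ∈ V1, ∀ y ∈ V2, ¬ G.Adj x y)
    (hperf1 : IsPerfect (G.induce (C ∪ V1))) (hperf2 : IsPerfect (G.induce (C ∪ V2))) :
    IsPerfect G := by
  classical
  intro s
  set B1 : Set V := s ∩ (C ∪ V1) with hB1def
  set B2 : Set V := s ∩ (C ∪ V2) with hB2def
  have hmemC : ∀ x : V, x ∉ C → x ∈ V1 ∪ V2 := by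
    intro x hx
    rw [hcover]
    exact hx
  have hunion : B1 ∪ B2 = s := by
    rw [hB1def, hB2def, ← Set.inter_union_distrib_left]
    have huniv : (C ∪ V1) ∪ (C ∪ V2) = Set.univ := by
      ext x
      simp only [Set.mem_union, Set.mem_univ, iff_true]
      by_cases hx : x ∈ C
      · exact Or.inl (Or.inl hx)
      · rcases hmemC x hx with h | h
        · exact Or.inl (Or.inr h)
        · exact Or.inr (Or.inr h)
    rw [huniv, Set.inter_univ]
  set k := (G.induce s).cliqueNum with hkdef
  have hB1s : B1 ⊆ s := Set.inter_subset_left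
  have hB2s : B2 ⊆ s := Set.inter_subset_left
  have hω1 : (G.induce B1).cliqueNum ≤ k := aux_cliqueNum_le_of_embedding (auxInduceEmb G hB1s)
  have hω2 : (G.induce B2).cliqueNum ≤ k := aux_cliqueNum_le_of_embedding (auxInduceEmb G hB2s)
  have hχ1 : (G.induce B1).chromaticNumber = ((G.induce B1).cliqueNum : ℕ∞) :=
    aux_perfect_sub G hperf1 Set.inter_subset_right
  have hχ2 : (G.induce B2).chromaticNumber = ((G.induce B2).cliqueNum : ℕ∞) :=
    aux_perfect_sub G hperf2 Set.inter_subset_right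
  have hcol1 : (G.induce B1).Colorable k :=
    chromaticNumber_le_iff_colorable.mp (hχ1 ▸ (Nat.cast_le.mpr hω1 : _ ≤ ((k : ℕ) : ℕ∞)))
  have hcol2 : (G.induce B2).Colorable k :=
    chromaticNumber_le_iff_colorable.mp (hχ2 ▸ (Nat.cast_le.mpr hω2 : _ ≤ ((k : ℕ) : ℕ∞)))
  have hKsub : B1 ∩ B2 ⊆ C := by
    rintro x ⟨⟨hxs, hx1⟩, ⟨_, hx2⟩⟩
    by_contra hxC
    rcases hmemC x hxC with h | h
    · exact (Set.disjoint_left.mp hdisj h) (hx2.resolve_left hxC)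
    · exact (Set.disjoint_left.mp hdisj (hx1.resolve_left hxC)) h
  have hKclique : G.IsClique (B1 ∩ B2) := hC.subset hKsub
  have hno : ∀ x ∈ B1 \ B2, ∀ y ∈ B2 \ B1, ¬ G.Adj x y := by
    rintro x ⟨⟨hxs, hx1⟩, hxn2⟩ y ⟨⟨hys, hy2⟩, hyn1⟩
    have hxC : x ∉ C := fun h => hxn2 ⟨hxs, Or.inl h⟩
    have hyC : y ∉ C := fun h => hyn1 ⟨hys, Or.inl h⟩
    have hxV1 : x ∈ V1 := hx1.resolve_left hxC
    have hyV2 : y ∈ V2 := hy2.resolve_left hyC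
    exact hsep x hxV1 y hyV2
  have hcol : (G.induce (B1 ∪ B2)).Colorable k := aux_glue G B1 B2 k hKclique hno hcol1 hcol2
  rw [hunion] at hcol
  apply le_antisymm hcol.chromaticNumber_le
  have hne : (G.induce s).chromaticNumber ≠ ⊤ :=
    (hcol.chromaticNumber_le.trans_lt (WithTop.coe_lt_top k)).ne
  have hcol' : (G.induce s).Colorable (ENat.toNat (G.induce s).chromaticNumber) :=
    colorable_of_chromaticNumber_ne_top hne
  calc ((G.induce s).cliqueNum : ℕ∞)
      ≤ ((ENat.toNat (G.induce s).chromaticNumber : ℕ) : ℕ∞) :=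
        Nat.cast_le.mpr (aux_cliqueNum_le_of_colorable hcol')
    _ = (G.induce s).chromaticNumber := ENat.coe_toNat hne
end
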